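/- Let E(t,x) = (4πit)^{−1/2} e^{i x²/(4t)} and let v₀ ∈ L¹(ℝ) be supported in [−1,1]. Then v(t,x) = ∫_{−1}^{1} E(t, x−y) v₀(y) dy satisfies, for all 0 < t₁ ≤ t ≤ t₂, all x ∈ [−L, L], and all k, l ≥ 0: |∂_x^k ∂_t^l v(t,x)| ≤ C · (k!)^{1/2}/R₁^k · l!/R₂^l · ‖v₀‖_{L¹}, for constants C, R₁, R₂ > 0 depending only on t₁, t₂, L. In particular v is Gevrey of order 1 in t and 1/2 in x on [t₁,t₂] × [−L,L]. -/

import Mathlib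

open Real Set Complex MeasureTheory intervalIntegral


/-- Iterated derivatives only depend on the germ of the function. -/
lemma iteratedDeriv_congr_nhds {𝕜 : Type*} [NontriviallyNormedField 𝕜] {E : Type*}
    [NormedAddCommGroup E] [NormedSpace 𝕜 E] {f g : 𝕜 → E} {x : 𝕜}
    (h : f =ᶠ[nhds x] g) (n : ℕ) : iteratedDeriv n f x = iteratedDeriv n g x := by
  have H : iteratedDeriv n f =ᶠ[nhds x] iteratedDeriv n g := by
    induction n with
    | zero => simpa [iteratedDeriv_zero] using h
    | succ n ih => simpa only [iteratedDeriv_succ] using ih.deriv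
  exact H.self_of_nhds

/-- Iterated derivative of the restriction to `ℝ` of a holomorphic function. -/
lemma iteratedDeriv_comp_ofReal {f : ℂ → ℂ} {U : Set ℂ} (hU : IsOpen U)
    (hf : AnalyticOnNhd ℂ f U) (n : ℕ) :
    ∀ x : ℝ, (x : ℂ) ∈ U →
      iteratedDeriv n (fun t : ℝ => f t) x = iteratedDeriv n f x := by
  induction n generalizing f with
  | zero => intro x _; simp [iteratedDeriv_zero]
  | succ n ih =>
    intro x hx
    have hmem : ∀ᶠ t : ℝ in nhds x, (t : ℂ) ∈ U :=
      (Complex.continuous_ofReal.continuousAt (x := x)).preimage_mem_nhds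
        (hU.mem_nhds hx)
    have hE : (deriv (fun t : ℝ => f t)) =ᶠ[nhds x] (fun t : ℝ => deriv f t) := by
      filter_upwards [hmem] with t ht
      exact (((hf t ht).differentiableAt.hasDerivAt).comp_ofReal).deriv
    calc iteratedDeriv (n + 1) (fun t : ℝ => f t) x
        = iteratedDeriv n (deriv (fun t : ℝ => f t)) x := by rw [iteratedDeriv_succ']
      _ = iteratedDeriv n (fun t : ℝ => deriv f t) x := iteratedDeriv_congr_nhds hE n
      _ = iteratedDeriv n (deriv f) x := ih (hf.deriv) x hx
      _ = iteratedDeriv (n + 1) f x := by rw [iteratedDeriv_succ']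

/-- Cauchy estimate. -/
lemma cauchy_estimate {f : ℂ → ℂ} {c : ℂ} {R M : ℝ} (hR : 0 < R)
    (hf : DifferentiableOn ℂ f (Metric.closedBall c R))
    (hM : ∀ z ∈ Metric.sphere c R, ‖f z‖ ≤ M) (n : ℕ) :
    ‖iteratedDeriv n f c‖ ≤ (n.factorial : ℝ) * M / R ^ n := by
  lift R to NNReal using hR.le with R' hR'
  have hR0 : (0 : NNReal) < R' := by exact_mod_cast hR
  have h := hf.hasFPowerSeriesOnBall hR0
  have key : iteratedDeriv n f c
      = n.factorial • (cauchyPowerSeries f c R' n fun _ => (1 : ℂ)) := by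
    rw [iteratedDeriv_eq_iteratedFDeriv, ← h.factorial_smul (1 : ℂ) n]
  have hcont : Continuous fun θ : ℝ => ‖f (circleMap c R' θ)‖ := by
    apply Continuous.norm
    apply hf.continuousOn.comp_continuous (continuous_circleMap c R')
    intro θ
    exact Metric.sphere_subset_closedBall (circleMap_mem_sphere c hR.le θ)
  have hint : (∫ θ : ℝ in (0)..2 * π, ‖f (circleMap c R' θ)‖) ≤ 2 * π * M := by
    have : (∫ θ : ℝ in (0)..2 * π, ‖f (circleMap c R' θ)‖)
        ≤ ∫ _ : ℝ in (0)..2 * π, M := by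
      apply intervalIntegral.integral_mono_on Real.two_pi_pos.le
        (hcont.intervalIntegrable _ _) (intervalIntegrable_const)
      intro θ _
      exact hM _ (circleMap_mem_sphere c hR.le θ)
    simpa [mul_comm] using this
  have hnorm : ‖cauchyPowerSeries f c R' n fun _ => (1 : ℂ)‖ ≤ M / (R' : ℝ) ^ n := by
    have h1 : ‖cauchyPowerSeries f c R' n fun _ => (1 : ℂ)‖
        ≤ ‖cauchyPowerSeries f c R' n‖ := by
      simpa using (cauchyPowerSeries f c R' n).le_opNorm (fun _ => (1 : ℂ))
    refine h1.trans ?_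
    refine (norm_cauchyPowerSeries_le f c R' n).trans ?_
    have habs : |(R' : ℝ)| = (R' : ℝ) := abs_of_pos hR
    have h2 : (2 * π)⁻¹ * (∫ θ : ℝ in (0)..2 * π, ‖f (circleMap c R' θ)‖) ≤ M := by
      rw [inv_mul_le_iff₀ (by positivity : (0:ℝ) < 2 * π)]
      linarith [hint]
    have h3 : (0:ℝ) ≤ |(R' : ℝ)|⁻¹ ^ n := by positivity
    calc ((2 * π)⁻¹ * ∫ θ : ℝ in (0)..2 * π, ‖f (circleMap c R' θ)‖) * |(R' : ℝ)|⁻¹ ^ n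
        ≤ M * |(R' : ℝ)|⁻¹ ^ n := mul_le_mul_of_nonneg_right h2 h3
      _ = M / (R' : ℝ) ^ n := by rw [habs]; rw [div_eq_mul_inv, inv_pow]
  calc ‖iteratedDeriv n f c‖
      = (n.factorial : ℝ) * ‖cauchyPowerSeries f c R' n fun _ => (1 : ℂ)‖ := by
        rw [key, ← Nat.cast_smul_eq_nsmul ℝ, norm_smul]
        simp
    _ ≤ (n.factorial : ℝ) * (M / (R' : ℝ) ^ n) :=
        mul_le_mul_of_nonneg_left hnorm (by positivity)
    _ = (n.factorial : ℝ) * M / (R' : ℝ) ^ n := by ring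


noncomputable def Kf (σ ζ : ℂ) (y : ℝ) : ℂ :=
  (4 * Real.pi * Complex.I * σ) ^ (-(1 / 2 : ℂ)) *
    Complex.exp (Complex.I * (ζ - (y : ℂ)) ^ 2 / (4 * σ))

noncomputable def Gf (v₀ : ℝ → ℂ) (σ ζ : ℂ) : ℂ := ∫ y in (-1 : ℝ)..1, Kf σ ζ y * v₀ y

lemma re_le_abs' (σ : ℂ) : σ.re ≤ ‖σ‖ := Complex.re_le_norm σ

lemma abs_W {σ : ℂ} : ‖4 * Real.pi * Complex.I * σ‖ = 4 * Real.pi * ‖σ‖ := by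
  simp [map_mul, Complex.norm_real, abs_of_pos Real.pi_pos]

lemma W_ne_zero {σ : ℂ} (hσ : σ ≠ 0) : (4 * Real.pi * Complex.I * σ) ≠ 0 := by
  apply mul_ne_zero (mul_ne_zero (mul_ne_zero ?_ ?_) Complex.I_ne_zero) hσ
  · norm_num
  · simpa using Real.pi_ne_zero

lemma Kf_norm_le {a : ℝ} (ha : 0 < a) {σ : ℂ} (hσ : a ≤ σ.re) (ζ : ℂ) (y : ℝ) :
    ‖Kf σ ζ y‖ ≤ (4 * Real.pi * a) ^ (-(1 / 2) : ℝ) *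
      Real.exp (‖ζ - (y : ℂ)‖ ^ 2 / (4 * a)) := by
  have habsσ : a ≤ ‖σ‖ := hσ.trans (re_le_abs' σ)
  have h1 : ‖(4 * Real.pi * Complex.I * σ) ^ (-(1 / 2 : ℂ))‖
      ≤ (4 * Real.pi * a) ^ (-(1 / 2) : ℝ) := by
    have : (-(1 / 2 : ℂ)) = ((-(1 / 2) : ℝ) : ℂ) := by norm_num
    rw [this]
    rw [Complex.norm_cpow_real, abs_W]
    apply Real.rpow_le_rpow_of_nonpos (by positivity)
    · nlinarith [Real.pi_pos]
    · norm_num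
  have h2 : ‖Complex.exp (Complex.I * (ζ - (y : ℂ)) ^ 2 / (4 * σ))‖
      ≤ Real.exp (‖ζ - (y : ℂ)‖ ^ 2 / (4 * a)) := by
    rw [Complex.norm_exp]
    apply Real.exp_le_exp.mpr
    calc (Complex.I * (ζ - (y : ℂ)) ^ 2 / (4 * σ)).re
        ≤ ‖Complex.I * (ζ - (y : ℂ)) ^ 2 / (4 * σ)‖ := re_le_abs' _
      _ = ‖ζ - (y : ℂ)‖ ^ 2 / (4 * ‖σ‖) := by
          simp [map_div₀, map_mul, map_pow, Complex.norm_I]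
      _ ≤ ‖ζ - (y : ℂ)‖ ^ 2 / (4 * a) := by
          apply div_le_div_of_nonneg_left (by positivity) (by positivity)
          linarith
  calc ‖Kf σ ζ y‖ = ‖(4 * Real.pi * Complex.I * σ) ^ (-(1 / 2 : ℂ))‖ *
        ‖Complex.exp (Complex.I * (ζ - (y : ℂ)) ^ 2 / (4 * σ))‖ := norm_mul _ _
    _ ≤ _ := mul_le_mul h1 h2 (norm_nonneg _) (by positivity)

/-- The kernel bound in the convenient form for `|y| ≤ 1`. -/
lemma Kf_norm_le' {a : ℝ} (ha : 0 < a) {σ : ℂ} (hσ : a ≤ σ.re) {ζ : ℂ} {y : ℝ}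
    (hy : |y| ≤ 1) {M : ℝ} (hζ : ‖ζ‖ ≤ M) :
    ‖Kf σ ζ y‖ ≤ (4 * Real.pi * a) ^ (-(1 / 2) : ℝ) *
      Real.exp ((M + 1) ^ 2 / (4 * a)) := by
  refine (Kf_norm_le ha hσ ζ y).trans ?_
  have hM : 0 ≤ M := (norm_nonneg ζ).trans hζ
  have hzy : ‖ζ - (y : ℂ)‖ ≤ M + 1 := by
    calc ‖ζ - (y : ℂ)‖ ≤ ‖ζ‖ + ‖(y : ℂ)‖ :=
          norm_sub_le _ _
      _ ≤ M + 1 := by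
          rw [Complex.norm_real, Real.norm_eq_abs]; exact add_le_add hζ hy
  gcongr



variable {v₀ : ℝ → ℂ}

/-- Bounding an integral of `f * v₀` over `[-1,1]` by a sup bound on `f` times `∫ ‖v₀‖`. -/
lemma bound_integral_mul (hint : Integrable v₀) {f : ℝ → ℂ} {B : ℝ}
    (hB : ∀ y ∈ Set.uIoc (-1 : ℝ) 1, ‖f y‖ ≤ B) (hB0 : 0 ≤ B) :
    ‖∫ y in (-1 : ℝ)..1, f y * v₀ y‖ ≤ B * ∫ y, ‖v₀ y‖ := by
  have h1 : ‖∫ y in (-1 : ℝ)..1, f y * v₀ y‖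
      ≤ |∫ y in (-1 : ℝ)..1, B * ‖v₀ y‖| := by
    apply intervalIntegral.norm_integral_le_abs_of_norm_le
    · filter_upwards [MeasureTheory.ae_restrict_mem measurableSet_uIoc] with y hy
      rw [norm_mul]
      exact mul_le_mul_of_nonneg_right (hB y hy) (norm_nonneg _)
    · exact hint.norm.intervalIntegrable.const_mul B
  refine h1.trans ?_
  have h2 : (∫ y in (-1 : ℝ)..1, B * ‖v₀ y‖) = B * ∫ y in (-1 : ℝ)..1, ‖v₀ y‖ :=
    intervalIntegral.integral_const_mul B _
  have h3 : (∫ y in (-1 : ℝ)..1, ‖v₀ y‖) ≤ ∫ y, ‖v₀ y‖ := by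
    rw [intervalIntegral.integral_of_le (by norm_num : (-1:ℝ) ≤ 1)]
    exact MeasureTheory.setIntegral_le_integral hint.norm
      (Filter.Eventually.of_forall fun y => norm_nonneg _)
  have h4 : (0:ℝ) ≤ ∫ y in (-1 : ℝ)..1, ‖v₀ y‖ :=
    intervalIntegral.integral_nonneg (by norm_num) fun y _ => norm_nonneg _
  rw [h2, _root_.abs_of_nonneg (mul_nonneg hB0 h4)]
  exact mul_le_mul_of_nonneg_left h3 hB0

lemma Gf_norm_le (hint : Integrable v₀) {a : ℝ} (ha : 0 < a) {σ : ℂ} (hσ : a ≤ σ.re)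
    {ζ : ℂ} {M : ℝ} (hζ : ‖ζ‖ ≤ M) :
    ‖Gf v₀ σ ζ‖ ≤ (4 * Real.pi * a) ^ (-(1 / 2) : ℝ) *
      Real.exp ((M + 1) ^ 2 / (4 * a)) * ∫ y, ‖v₀ y‖ := by
  apply bound_integral_mul hint
  · intro y hy
    have hy1 : |y| ≤ 1 := by
      rw [Set.uIoc_of_le (by norm_num : (-1:ℝ) ≤ 1)] at hy
      rw [abs_le]; exact ⟨hy.1.le, hy.2⟩
    exact Kf_norm_le' ha hσ hy1 hζ
  · positivity
/-- The kernel is continuous in `y` (for `σ ≠ 0` not even needed). -/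
lemma Kf_continuous_y (σ ζ : ℂ) : Continuous fun y : ℝ => Kf σ ζ y := by
  apply continuous_const.mul
  exact Complex.continuous_exp.comp <|
    (continuous_const.mul ((continuous_const.sub Complex.continuous_ofReal).pow 2)).div_const _

/-- ζ-derivative of the kernel. -/
lemma Kf_hasDerivAt_zeta {σ : ℂ} (hσ : σ ≠ 0) (ζ : ℂ) (y : ℝ) :
    HasDerivAt (fun ζ => Kf σ ζ y)
      (Kf σ ζ y * (Complex.I * (ζ - (y : ℂ)) / (2 * σ))) ζ := by
  have hu : HasDerivAt (fun ζ : ℂ => Complex.I * (ζ - (y : ℂ)) ^ 2 / (4 * σ))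
      (Complex.I * (2 * (ζ - (y : ℂ))) / (4 * σ)) ζ := by
    have h1 : HasDerivAt (fun ζ : ℂ => (ζ - (y : ℂ)) ^ 2)
        (2 * (ζ - (y : ℂ))) ζ := by
      simpa using ((hasDerivAt_id ζ).sub_const (y : ℂ)).fun_pow 2
    simpa [mul_div_assoc] using (h1.const_mul Complex.I).div_const (4 * σ)
  have := ((hu.cexp).const_mul ((4 * Real.pi * Complex.I * σ) ^ (-(1 / 2 : ℂ))))
  refine HasDerivAt.congr_deriv this ?_
  unfold Kf
  field_simp
  ring
noncomputable def dK (σ ζ : ℂ) (y : ℝ) : ℂ :=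
  Kf σ ζ y * (-(1 / (2 * σ)) - Complex.I * (ζ - (y : ℂ)) ^ 2 / (4 * σ ^ 2))

/-- σ-derivative of the kernel. -/
lemma Kf_hasDerivAt_sigma {σ : ℂ} (hσ : 0 < σ.re) (ζ : ℂ) (y : ℝ) :
    HasDerivAt (fun σ => Kf σ ζ y) (dK σ ζ y) σ := by
  have hσ0 : σ ≠ 0 := by
    intro h; rw [h] at hσ; simp at hσ
  have hW : (4 * Real.pi * Complex.I * σ) ≠ 0 := W_ne_zero hσ0
  have him : (4 * Real.pi * Complex.I * σ).im ≠ 0 := by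
    have : (4 * Real.pi * Complex.I * σ).im = 4 * Real.pi * σ.re := by
      simp [Complex.mul_im, Complex.mul_re]
    rw [this]
    positivity
  -- derivative of the cpow factor
  have h1 : HasDerivAt (fun σ : ℂ => (4 * Real.pi * Complex.I * σ) ^ (-(1 / 2 : ℂ)))
      ((-(1 / 2 : ℂ)) * (4 * Real.pi * Complex.I * σ) ^ (-(1 / 2 : ℂ) - 1) *
        (4 * Real.pi * Complex.I)) σ := by
    have hbase : HasDerivAt (fun σ : ℂ => 4 * Real.pi * Complex.I * σ)
        (4 * Real.pi * Complex.I) σ := by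
      simpa using (hasDerivAt_id σ).const_mul (4 * (Real.pi : ℂ) * Complex.I)
    exact hbase.cpow_const (Or.inr him)
  -- derivative of the exponential factor
  have h2 : HasDerivAt (fun σ : ℂ => Complex.exp (Complex.I * (ζ - (y : ℂ)) ^ 2 / (4 * σ)))
      (Complex.exp (Complex.I * (ζ - (y : ℂ)) ^ 2 / (4 * σ)) *
        (Complex.I * (ζ - (y : ℂ)) ^ 2 / 4 * (-(σ ^ 2)⁻¹))) σ := by
    have hu : HasDerivAt (fun σ : ℂ => Complex.I * (ζ - (y : ℂ)) ^ 2 / (4 * σ))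
        (Complex.I * (ζ - (y : ℂ)) ^ 2 / 4 * (-(σ ^ 2)⁻¹)) σ := by
      have hinv : HasDerivAt (fun σ : ℂ => σ⁻¹) (-(σ ^ 2)⁻¹) σ := by
        simpa using hasDerivAt_inv hσ0
      have heq : (fun σ : ℂ => Complex.I * (ζ - (y : ℂ)) ^ 2 / (4 * σ))
          = fun σ : ℂ => Complex.I * (ζ - (y : ℂ)) ^ 2 / 4 * σ⁻¹ := by
        funext σ
        by_cases h : σ = 0
        · simp [h]
        · field_simp
      rw [heq]
      exact hinv.const_mul _
    exact hu.cexp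
  have key := h1.mul h2
  refine HasDerivAt.congr_deriv key ?_
  unfold dK Kf
  rw [show (-(1 / 2 : ℂ) - 1) = (-(1 / 2 : ℂ)) + (-1) by ring,
    Complex.cpow_add _ _ hW, Complex.cpow_neg_one]
  field_simp
  ring
lemma dK_continuous_zeta (σ : ℂ) (y : ℝ) : Continuous fun ζ => dK σ ζ y := by
  unfold dK Kf
  apply Continuous.mul
  · apply continuous_const.mul
    exact Complex.continuous_exp.comp <|
      (continuous_const.mul ((continuous_id.sub continuous_const).pow 2)).div_const _
  · exact continuous_const.sub
      ((continuous_const.mul ((continuous_id.sub continuous_const).pow 2)).div_const _)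

lemma dK_continuous_y (σ ζ : ℂ) : Continuous fun y : ℝ => dK σ ζ y := by
  unfold dK
  exact (Kf_continuous_y σ ζ).mul
    (continuous_const.sub ((continuous_const.mul
      ((continuous_const.sub Complex.continuous_ofReal).pow 2)).div_const _))

lemma dK_norm_le {a : ℝ} (ha : 0 < a) {σ : ℂ} (hσ : a ≤ σ.re) {ζ : ℂ} {y : ℝ}
    (hy : |y| ≤ 1) {M : ℝ} (hζ : ‖ζ‖ ≤ M) :
    ‖dK σ ζ y‖ ≤ (4 * Real.pi * a) ^ (-(1 / 2) : ℝ) * Real.exp ((M + 1) ^ 2 / (4 * a)) *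
      (1 / (2 * a) + (M + 1) ^ 2 / (4 * a ^ 2)) := by
  have habsσ : a ≤ ‖σ‖ := hσ.trans (re_le_abs' σ)
  have hM : 0 ≤ M := (norm_nonneg ζ).trans hζ
  have hzy : ‖ζ - (y : ℂ)‖ ≤ M + 1 := by
    calc ‖ζ - (y : ℂ)‖ ≤ ‖ζ‖ + ‖(y : ℂ)‖ :=
          norm_sub_le _ _
      _ ≤ M + 1 := by rw [Complex.norm_real, Real.norm_eq_abs]; exact add_le_add hζ hy
  have h2 : ‖-(1 / (2 * σ)) - Complex.I * (ζ - (y : ℂ)) ^ 2 / (4 * σ ^ 2)‖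
      ≤ 1 / (2 * a) + (M + 1) ^ 2 / (4 * a ^ 2) := by
    refine (norm_sub_le _ _).trans (add_le_add ?_ ?_)
    · have e1 : ‖-(1 / (2 * σ))‖ = 1 / (2 * ‖σ‖) := by
        simp [map_div₀, map_mul]
      rw [e1]
      exact one_div_le_one_div_of_le (by positivity) (by linarith)
    · have e2 : ‖Complex.I * (ζ - (y : ℂ)) ^ 2 / (4 * σ ^ 2)‖
          = ‖ζ - (y : ℂ)‖ ^ 2 / (4 * ‖σ‖ ^ 2) := by
        simp [map_div₀, map_mul, map_pow, Complex.norm_I]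
      rw [e2]
      exact div_le_div₀ (by positivity) (pow_le_pow_left₀ (norm_nonneg _) hzy 2)
        (by positivity) (by nlinarith)
  calc ‖dK σ ζ y‖ = ‖Kf σ ζ y‖ *
        ‖-(1 / (2 * σ)) - Complex.I * (ζ - (y : ℂ)) ^ 2 / (4 * σ ^ 2)‖ := norm_mul _ _
    _ ≤ _ := mul_le_mul (Kf_norm_le' ha hσ hy hζ) h2 (norm_nonneg _) (by positivity)
lemma Kv_intervalIntegrable (hint : Integrable v₀) (σ ζ : ℂ) :
    IntervalIntegrable (fun y => Kf σ ζ y * v₀ y) volume (-1 : ℝ) 1 :=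
  (hint.intervalIntegrable).continuousOn_mul (Kf_continuous_y σ ζ).continuousOn

lemma Gf_differentiable (hint : Integrable v₀) {a : ℝ} (ha : 0 < a) {σ : ℂ}
    (hσ : a ≤ σ.re) : Differentiable ℂ (Gf v₀ σ) := by
  have hσ0 : σ ≠ 0 := by
    intro h; rw [h] at hσ; simp at hσ; linarith
  intro ζ₀
  set M : ℝ := ‖ζ₀‖ + 1 with hM
  have hM0 : 0 ≤ M := by positivity
  set B : ℝ := (4 * Real.pi * a) ^ (-(1 / 2) : ℝ) * Real.exp ((M + 1) ^ 2 / (4 * a)) *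
    ((M + 1) / (2 * a)) with hB
  have key := intervalIntegral.hasDerivAt_integral_of_dominated_loc_of_deriv_le
    (𝕜 := ℂ) (μ := volume) (a := (-1:ℝ)) (b := 1)
    (F := fun ζ y => Kf σ ζ y * v₀ y)
    (F' := fun ζ y => Kf σ ζ y * (Complex.I * (ζ - (y : ℂ)) / (2 * σ)) * v₀ y)
    (x₀ := ζ₀) (bound := fun y => B * ‖v₀ y‖) (Metric.ball_mem_nhds ζ₀ one_pos)
    (Filter.Eventually.of_forall fun ζ =>
      ((Kf_continuous_y σ ζ).aestronglyMeasurable).mul hint.1.restrict)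
    (Kv_intervalIntegrable hint σ ζ₀)
    (((((Kf_continuous_y σ ζ₀).mul
        ((continuous_const.mul
          (continuous_const.sub Complex.continuous_ofReal)).div_const _)).aestronglyMeasurable)).mul
      hint.1.restrict)
    ?_ ((hint.norm.intervalIntegrable).const_mul B) ?_
  · exact ⟨_, key.2⟩
  · -- bound
    refine Filter.Eventually.of_forall fun y hy => fun ζ hζ => ?_
    have hy1 : |y| ≤ 1 := by
      rw [Set.uIoc_of_le (by norm_num : (-1:ℝ) ≤ 1)] at hy
      rw [abs_le]; exact ⟨hy.1.le, hy.2⟩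
    have hζM : ‖ζ‖ ≤ M := by
      rw [hM]
      have := mem_ball_iff_norm.mp hζ
      calc ‖ζ‖ ≤ ‖ζ - ζ₀‖ + ‖ζ₀‖ := by
            simpa using norm_add_le (ζ - ζ₀) ζ₀
        _ ≤ ‖ζ₀‖ + 1 := by
            rw [add_comm]; exact add_le_add le_rfl this.le
    have hzy : ‖ζ - (y : ℂ)‖ ≤ M + 1 := by
      calc ‖ζ - (y : ℂ)‖ ≤ ‖ζ‖ + ‖(y : ℂ)‖ :=
            norm_sub_le _ _
        _ ≤ M + 1 := by rw [Complex.norm_real, Real.norm_eq_abs]; exact add_le_add hζM hy1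
    have habsσ : a ≤ ‖σ‖ := hσ.trans (re_le_abs' σ)
    have h1 : ‖Complex.I * (ζ - (y : ℂ)) / (2 * σ)‖ ≤ (M + 1) / (2 * a) := by
      have e : ‖Complex.I * (ζ - (y : ℂ)) / (2 * σ)‖
          = ‖ζ - (y : ℂ)‖ / (2 * ‖σ‖) := by
        simp [map_div₀, map_mul, Complex.norm_I]
      rw [e]
      exact div_le_div₀ (by positivity) hzy (by positivity) (by linarith)
    calc ‖Kf σ ζ y * (Complex.I * (ζ - (y : ℂ)) / (2 * σ)) * v₀ y‖
        = ‖Kf σ ζ y‖ * ‖Complex.I * (ζ - (y : ℂ)) / (2 * σ)‖ * ‖v₀ y‖ := by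
          rw [norm_mul, norm_mul]
      _ ≤ ((4 * Real.pi * a) ^ (-(1 / 2) : ℝ) * Real.exp ((M + 1) ^ 2 / (4 * a)))
            * ((M + 1) / (2 * a)) * ‖v₀ y‖ := by
          apply mul_le_mul_of_nonneg_right _ (norm_nonneg _)
          exact mul_le_mul (Kf_norm_le' ha hσ hy1 hζM) h1 (norm_nonneg _) (by positivity)
      _ = B * ‖v₀ y‖ := by rw [hB]
  · -- differentiability
    refine Filter.Eventually.of_forall fun y hy => fun ζ hζ => ?_
    exact (Kf_hasDerivAt_zeta hσ0 ζ y).mul_const (v₀ y)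
lemma uIoc_abs_le {y : ℝ} (hy : y ∈ Set.uIoc (-1 : ℝ) 1) : |y| ≤ 1 := by
  rw [Set.uIoc_of_le (by norm_num : (-1:ℝ) ≤ 1)] at hy
  rw [abs_le]; exact ⟨hy.1.le, hy.2⟩

lemma dKv_intervalIntegrable (hint : Integrable v₀) (σ ζ : ℂ) :
    IntervalIntegrable (fun y => dK σ ζ y * v₀ y) volume (-1 : ℝ) 1 :=
  (hint.intervalIntegrable).continuousOn_mul (dK_continuous_y σ ζ).continuousOn

lemma Gf_hasDerivAt_sigma (hint : Integrable v₀) {a : ℝ} (ha : 0 < a) {σ₀ : ℂ}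
    (hσ : a < σ₀.re) (ζ : ℂ) :
    HasDerivAt (fun σ => Gf v₀ σ ζ) (∫ y in (-1 : ℝ)..1, dK σ₀ ζ y * v₀ y) σ₀ := by
  set M : ℝ := ‖ζ‖ with hMdef
  have hM0 : 0 ≤ M := norm_nonneg ζ
  set B : ℝ := (4 * Real.pi * a) ^ (-(1 / 2) : ℝ) * Real.exp ((M + 1) ^ 2 / (4 * a)) *
    (1 / (2 * a) + (M + 1) ^ 2 / (4 * a ^ 2)) with hB
  have hball : ∀ σ ∈ Metric.ball σ₀ (σ₀.re - a), a < σ.re := by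
    intro σ hσ'
    have h1 : |σ.re - σ₀.re| ≤ ‖σ - σ₀‖ := by
      simpa [Complex.sub_re] using Complex.abs_re_le_norm (σ - σ₀)
    have h2 := mem_ball_iff_norm.mp hσ'
    have := (abs_le.mp h1).1
    linarith
  have key := intervalIntegral.hasDerivAt_integral_of_dominated_loc_of_deriv_le
    (𝕜 := ℂ) (μ := volume) (a := (-1:ℝ)) (b := 1)
    (F := fun σ y => Kf σ ζ y * v₀ y)
    (F' := fun σ y => dK σ ζ y * v₀ y)
    (x₀ := σ₀) (bound := fun y => B * ‖v₀ y‖) (Metric.ball_mem_nhds σ₀ (by linarith : (0:ℝ) < σ₀.re - a))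
    (Filter.Eventually.of_forall fun σ =>
      ((Kf_continuous_y σ ζ).aestronglyMeasurable).mul hint.1.restrict)
    (Kv_intervalIntegrable hint σ₀ ζ)
    ((dK_continuous_y σ₀ ζ).aestronglyMeasurable.mul hint.1.restrict)
    ?_ ((hint.norm.intervalIntegrable).const_mul B) ?_
  · exact key.2
  · refine Filter.Eventually.of_forall fun y hy => fun σ hσ' => ?_
    have hσa : a ≤ σ.re := (hball σ hσ').le
    rw [norm_mul]
    exact mul_le_mul_of_nonneg_right (dK_norm_le ha hσa (uIoc_abs_le hy) le_rfl)
      (norm_nonneg _)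
  · refine Filter.Eventually.of_forall fun y hy => fun σ hσ' => ?_
    exact (Kf_hasDerivAt_sigma (ha.trans (hball σ hσ')) ζ y).mul_const (v₀ y)

lemma dKint_continuous (hint : Integrable v₀) {a : ℝ} (ha : 0 < a) {σ : ℂ}
    (hσ : a ≤ σ.re) :
    Continuous fun ζ => ∫ y in (-1 : ℝ)..1, dK σ ζ y * v₀ y := by
  rw [continuous_iff_continuousAt]
  intro ζ₀
  set M : ℝ := ‖ζ₀‖ + 1 with hMdef
  set B : ℝ := (4 * Real.pi * a) ^ (-(1 / 2) : ℝ) * Real.exp ((M + 1) ^ 2 / (4 * a)) *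
    (1 / (2 * a) + (M + 1) ^ 2 / (4 * a ^ 2)) with hB
  apply intervalIntegral.continuousAt_of_dominated_interval
    (bound := fun y => B * ‖v₀ y‖)
  · exact Filter.Eventually.of_forall fun ζ =>
      (dK_continuous_y σ ζ).aestronglyMeasurable.mul hint.1.restrict
  · filter_upwards [Metric.ball_mem_nhds ζ₀ one_pos] with ζ hζ
    refine Filter.Eventually.of_forall fun y => fun hy => ?_
    have hζM : ‖ζ‖ ≤ M := by
      rw [hMdef]
      have := mem_ball_iff_norm.mp hζ
      calc ‖ζ‖ ≤ ‖ζ - ζ₀‖ + ‖ζ₀‖ := by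
            simpa using norm_add_le (ζ - ζ₀) ζ₀
        _ ≤ ‖ζ₀‖ + 1 := by rw [add_comm]; exact add_le_add le_rfl this.le
    rw [norm_mul]
    exact mul_le_mul_of_nonneg_right (dK_norm_le ha hσ (uIoc_abs_le hy) hζM)
      (norm_nonneg _)
  · exact (hint.norm.intervalIntegrable).const_mul B
  · exact Filter.Eventually.of_forall fun y hy =>
      ((dK_continuous_zeta σ y).mul continuous_const).continuousAt
lemma dGf_norm_le (hint : Integrable v₀) {a : ℝ} (ha : 0 < a) {σ : ℂ} (hσ : a ≤ σ.re)
    {ζ : ℂ} {M : ℝ} (hζ : ‖ζ‖ ≤ M) :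
    ‖∫ y in (-1 : ℝ)..1, dK σ ζ y * v₀ y‖ ≤
      (4 * Real.pi * a) ^ (-(1 / 2) : ℝ) * Real.exp ((M + 1) ^ 2 / (4 * a)) *
        (1 / (2 * a) + (M + 1) ^ 2 / (4 * a ^ 2)) * ∫ y, ‖v₀ y‖ := by
  have hM : 0 ≤ M := (norm_nonneg ζ).trans hζ
  apply bound_integral_mul hint
  · intro y hy
    exact dK_norm_le ha hσ (uIoc_abs_le hy) hζ
  · positivity

lemma circleMap_one_ne_zero (θ : ℝ) : circleMap 0 1 θ ≠ 0 := by
  simp [circleMap, Complex.exp_ne_zero]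

/-- Cauchy integral representation of the iterated derivative. -/
lemma Phi_rep (hint : Integrable v₀) {a : ℝ} (ha : 0 < a) {σ : ℂ} (hσ : a ≤ σ.re)
    (x : ℝ) (k : ℕ) :
    iteratedDeriv k (Gf v₀ σ) (x : ℂ) = (k.factorial : ℂ) *
      ((2 * (Real.pi : ℂ) * Complex.I)⁻¹ *
        ∫ θ in (0 : ℝ)..2 * Real.pi,
          (deriv (circleMap (x : ℂ) 1) θ *
            ((circleMap (x : ℂ) 1 θ - (x : ℂ))⁻¹ ^ k *
              (circleMap (x : ℂ) 1 θ - (x : ℂ))⁻¹)) * Gf v₀ σ (circleMap (x : ℂ) 1 θ)) := by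
  have hdiff : DifferentiableOn ℂ (Gf v₀ σ)
      (Metric.closedBall (x : ℂ) ((1 : NNReal) : ℝ)) :=
    (Gf_differentiable hint ha hσ).differentiableOn
  have h := hdiff.hasFPowerSeriesOnBall (one_pos : (0 : NNReal) < 1)
  have key := h.factorial_smul (1 : ℂ) k
  rw [iteratedDeriv_eq_iteratedFDeriv, ← key, cauchyPowerSeries_apply]
  unfold circleIntegral
  simp only [smul_eq_mul, nsmul_eq_mul, NNReal.coe_one, one_div]
  congr 1
  congr 1
  apply intervalIntegral.integral_congr
  intro θ _
  ring

lemma Phi_diffAt (hint : Integrable v₀) {a : ℝ} (ha : 0 < a) {σ₀ : ℂ}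
    (hσ : a < σ₀.re) (x : ℝ) (k : ℕ) :
    DifferentiableAt ℂ (fun σ => iteratedDeriv k (Gf v₀ σ) (x : ℂ)) σ₀ := by
  set c : ℝ → ℂ := fun θ => deriv (circleMap (x : ℂ) 1) θ *
    ((circleMap (x : ℂ) 1 θ - (x : ℂ))⁻¹ ^ k * (circleMap (x : ℂ) 1 θ - (x : ℂ))⁻¹) with hc
  have hcnorm : ∀ θ, ‖c θ‖ = 1 := by
    intro θ
    rw [hc]
    simp [deriv_circleMap, circleMap_sub_center, norm_mul, map_inv₀, map_pow,
      norm_circleMap_zero, Complex.norm_I]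
  have hccont : Continuous c := by
    rw [hc]
    have h1 : Continuous fun θ => deriv (circleMap (x : ℂ) 1) θ := by
      have : (fun θ => deriv (circleMap (x : ℂ) 1) θ)
          = fun θ => circleMap 0 1 θ * Complex.I := by
        funext θ; exact deriv_circleMap _ _ _
      rw [this]
      exact (continuous_circleMap 0 1).mul continuous_const
    have h2 : Continuous fun θ => (circleMap (x : ℂ) 1 θ - (x : ℂ))⁻¹ := by
      have : (fun θ => (circleMap (x : ℂ) 1 θ - (x : ℂ))⁻¹)
          = fun θ => (circleMap 0 1 θ)⁻¹ := by
        funext θ; rw [circleMap_sub_center]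
      rw [this]
      exact (continuous_circleMap 0 1).inv₀ circleMap_one_ne_zero
    exact h1.mul ((h2.pow k).mul h2)
  have hxbound : ∀ θ, ‖circleMap (x : ℂ) 1 θ‖ ≤ ‖(x : ℂ)‖ + 1 := by
    intro θ
    calc ‖circleMap (x : ℂ) 1 θ‖
        = ‖(x : ℂ) + (circleMap (x : ℂ) 1 θ - (x : ℂ))‖ := by ring_nf
      _ ≤ ‖(x : ℂ)‖ + ‖circleMap (x : ℂ) 1 θ - (x : ℂ)‖ :=
          norm_add_le _ _
      _ = ‖(x : ℂ)‖ + 1 := by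
          rw [circleMap_sub_center, norm_circleMap_zero]; norm_num
  set M : ℝ := ‖(x : ℂ)‖ + 1 with hM
  set D : ℝ := (4 * Real.pi * a) ^ (-(1 / 2) : ℝ) * Real.exp ((M + 1) ^ 2 / (4 * a)) *
    (1 / (2 * a) + (M + 1) ^ 2 / (4 * a ^ 2)) * ∫ y, ‖v₀ y‖ with hD
  have hball : ∀ σ ∈ Metric.ball σ₀ (σ₀.re - a), a < σ.re := by
    intro σ hσ'
    have h1 : |σ.re - σ₀.re| ≤ ‖σ - σ₀‖ := by
      simpa [Complex.sub_re] using Complex.abs_re_le_norm (σ - σ₀)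
    have h2 := mem_ball_iff_norm.mp hσ'
    have := (abs_le.mp h1).1
    linarith
  have hopen : ∀ᶠ σ in nhds σ₀, a < σ.re := by
    have : IsOpen {σ : ℂ | a < σ.re} := isOpen_lt continuous_const Complex.continuous_re
    exact this.eventually_mem hσ
  have key := intervalIntegral.hasDerivAt_integral_of_dominated_loc_of_deriv_le
    (𝕜 := ℂ) (μ := volume) (a := (0:ℝ)) (b := 2 * Real.pi)
    (F := fun σ θ => c θ * Gf v₀ σ (circleMap (x : ℂ) 1 θ))
    (F' := fun σ θ => c θ * ∫ y in (-1 : ℝ)..1, dK σ (circleMap (x : ℂ) 1 θ) y * v₀ y)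
    (x₀ := σ₀) (bound := fun _ => D) (Metric.ball_mem_nhds σ₀ (by linarith : (0:ℝ) < σ₀.re - a))
    ?_ ?_ ?_ ?_ (intervalIntegrable_const) ?_
  · -- conclude
    have hΨ : DifferentiableAt ℂ (fun σ => (k.factorial : ℂ) *
        ((2 * (Real.pi : ℂ) * Complex.I)⁻¹ *
          ∫ θ in (0 : ℝ)..2 * Real.pi, c θ * Gf v₀ σ (circleMap (x : ℂ) 1 θ))) σ₀ :=
      ((key.2.differentiableAt.const_mul _).const_mul _)
    apply hΨ.congr_of_eventuallyEq
    filter_upwards [hopen] with σ hσ'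
    exact Phi_rep hint ha hσ'.le x k
  · -- measurability of F σ for σ near σ₀
    filter_upwards [hopen] with σ hσ'
    exact (hccont.mul (((Gf_differentiable hint ha hσ'.le).continuous).comp
      (continuous_circleMap _ _))).aestronglyMeasurable
  · -- interval integrability of F σ₀
    exact (hccont.mul (((Gf_differentiable hint ha hσ.le).continuous).comp
      (continuous_circleMap _ _))).intervalIntegrable _ _
  · -- measurability of F' σ₀
    exact (hccont.mul ((dKint_continuous hint ha hσ.le).comp
      (continuous_circleMap _ _))).aestronglyMeasurable
  · -- bound
    refine Filter.Eventually.of_forall fun θ _ => fun σ hσ' => ?_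
    rw [norm_mul, hcnorm, one_mul, hD]
    exact dGf_norm_le hint ha (hball σ hσ').le (hxbound θ)
  · -- differentiability in σ
    refine Filter.Eventually.of_forall fun θ _ => fun σ hσ' => ?_
    exact (Gf_hasDerivAt_sigma hint ha (hball σ hσ') _).const_mul (c θ)
lemma arith_bound {a L I₀ : ℝ} (ha : 0 < a) (hL : 0 ≤ L) (hI : 0 ≤ I₀) (k : ℕ) :
    (k.factorial : ℝ) * ((4 * Real.pi * a) ^ (-(1 / 2) : ℝ) *
        Real.exp ((L + Real.sqrt ((k : ℝ) + 1) + 1) ^ 2 / (4 * a)) * I₀) /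
      (Real.sqrt ((k : ℝ) + 1)) ^ k
    ≤ ((4 * Real.pi * a) ^ (-(1 / 2) : ℝ) * Real.exp (((L + 1) ^ 2 + 1) / (2 * a))) *
        (Real.sqrt (k.factorial) / (Real.exp (-(1 / (2 * a)))) ^ k) * I₀ := by
  set s : ℝ := Real.sqrt ((k : ℝ) + 1) with hsdef
  have hs1 : s ^ 2 = (k : ℝ) + 1 := Real.sq_sqrt (by positivity)
  have hs0 : 0 < s := Real.sqrt_pos.mpr (by positivity)
  have e1 : (L + s + 1) ^ 2 / (4 * a) ≤ ((L + 1) ^ 2 + 1) / (2 * a) + k * (1 / (2 * a)) := by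
    have key : (L + s + 1) ^ 2 ≤ 2 * (L + 1) ^ 2 + 2 * ((k : ℝ) + 1) := by
      nlinarith [hs1, sq_nonneg (L + 1 - s)]
    calc (L + s + 1) ^ 2 / (4 * a) ≤ (2 * (L + 1) ^ 2 + 2 * ((k : ℝ) + 1)) / (4 * a) := by
          gcongr
      _ = ((L + 1) ^ 2 + 1) / (2 * a) + k * (1 / (2 * a)) := by
          field_simp
          ring
  have e1' : Real.exp ((L + s + 1) ^ 2 / (4 * a))
      ≤ Real.exp (((L + 1) ^ 2 + 1) / (2 * a)) * Real.exp (1 / (2 * a)) ^ k := by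
    rw [← Real.exp_nat_mul, ← Real.exp_add]
    exact Real.exp_le_exp.mpr e1
  have hsk : Real.sqrt (k.factorial) ≤ s ^ k := by
    have h1 : (k.factorial : ℝ) ≤ ((k : ℝ) + 1) ^ k := by
      have h2 := Nat.factorial_le_pow k
      calc (k.factorial : ℝ) ≤ ((k : ℝ)) ^ k := by exact_mod_cast h2
        _ ≤ ((k : ℝ) + 1) ^ k := pow_le_pow_left₀ (by positivity) (by linarith) k
    calc Real.sqrt (k.factorial) ≤ Real.sqrt (((k : ℝ) + 1) ^ k) := Real.sqrt_le_sqrt h1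
      _ = s ^ k := by
          rw [hsdef, Real.sqrt_eq_rpow, Real.sqrt_eq_rpow,
            ← Real.rpow_natCast ((k : ℝ) + 1) k, ← Real.rpow_mul (by positivity),
            mul_comm, Real.rpow_mul (by positivity), Real.rpow_natCast]
  have e2 : (k.factorial : ℝ) / s ^ k ≤ Real.sqrt (k.factorial) := by
    have hsk0 : 0 < s ^ k := pow_pos hs0 k
    rw [div_le_iff₀ hsk0]
    calc (k.factorial : ℝ) = Real.sqrt (k.factorial) * Real.sqrt (k.factorial) :=
          (Real.mul_self_sqrt (by positivity)).symm
      _ ≤ Real.sqrt (k.factorial) * s ^ k :=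
          mul_le_mul_of_nonneg_left hsk (Real.sqrt_nonneg _)
  have hrpow : (Real.exp (-(1 / (2 * a)))) ^ k = (Real.exp (1 / (2 * a)) ^ k)⁻¹ := by
    rw [Real.exp_neg, inv_pow]
  calc (k.factorial : ℝ) * ((4 * Real.pi * a) ^ (-(1 / 2) : ℝ) *
        Real.exp ((L + s + 1) ^ 2 / (4 * a)) * I₀) / s ^ k
      = ((4 * Real.pi * a) ^ (-(1 / 2) : ℝ) * I₀) *
        (((k.factorial : ℝ) / s ^ k) * Real.exp ((L + s + 1) ^ 2 / (4 * a))) := by ring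
    _ ≤ ((4 * Real.pi * a) ^ (-(1 / 2) : ℝ) * I₀) *
        (Real.sqrt (k.factorial) *
          (Real.exp (((L + 1) ^ 2 + 1) / (2 * a)) * Real.exp (1 / (2 * a)) ^ k)) := by
        apply mul_le_mul_of_nonneg_left _ (by positivity)
        exact mul_le_mul e2 e1' (Real.exp_pos _).le (Real.sqrt_nonneg _)
    _ = ((4 * Real.pi * a) ^ (-(1 / 2) : ℝ) * Real.exp (((L + 1) ^ 2 + 1) / (2 * a))) *
        (Real.sqrt (k.factorial) / (Real.exp (-(1 / (2 * a)))) ^ k) * I₀ := by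
        rw [hrpow]
        field_simp
theorem lemma1_kernel_gevrey (v₀ : ℝ → ℂ)
    (hint : Integrable v₀)
    (hsupp : ∀ x : ℝ, x ∉ Icc (-1 : ℝ) 1 → v₀ x = 0) :
    ∀ t₁ t₂ L : ℝ, 0 < t₁ → t₁ ≤ t₂ → 0 < L →
      ∃ C R₁ R₂ : ℝ, 0 < C ∧ 0 < R₁ ∧ 0 < R₂ ∧
        ∀ (k l : ℕ), ∀ t ∈ Icc t₁ t₂, ∀ x ∈ Icc (-L) L,
          ‖iteratedDeriv l
              (fun τ : ℝ => iteratedDeriv k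
                (fun ξ : ℝ => ∫ y in (-1 : ℝ)..1,
                  (4 * Real.pi * Complex.I * (τ : ℂ)) ^ (-(1 / 2 : ℂ)) *
                    Complex.exp (Complex.I * ((ξ : ℂ) - (y : ℂ)) ^ 2 / (4 * (τ : ℂ))) *
                      v₀ y) x) t‖
            ≤ C * ((Nat.factorial k : ℝ) ^ ((1 : ℝ) / 2) / R₁ ^ k) *
                ((Nat.factorial l : ℝ) / R₂ ^ l) * ∫ y, ‖v₀ y‖ := by
  intro t₁ t₂ L ht₁ ht₁₂ hL
  set a : ℝ := t₁ / 2 with hadef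
  have ha : 0 < a := by positivity
  set I₀ : ℝ := ∫ y, ‖v₀ y‖ with hI₀def
  have hI₀0 : 0 ≤ I₀ := integral_nonneg fun y => norm_nonneg _
  set C : ℝ := (4 * Real.pi * a) ^ (-(1 / 2) : ℝ) *
    Real.exp (((L + 1) ^ 2 + 1) / (2 * a)) with hCdef
  refine ⟨C, Real.exp (-(1 / (2 * a))), t₁ / 4, by positivity, Real.exp_pos _,
    by positivity, ?_⟩
  intro k l t ht x hx
  -- the function Φ
  set Φ : ℂ → ℂ := fun σ => iteratedDeriv k (Gf v₀ σ) (x : ℂ) with hΦdef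
  have hSopen : IsOpen {σ : ℂ | a < σ.re} := isOpen_lt continuous_const Complex.continuous_re
  have hΦan : AnalyticOnNhd ℂ Φ {σ : ℂ | a < σ.re} := by
    apply DifferentiableOn.analyticOnNhd _ hSopen
    intro σ hσ
    exact (Phi_diffAt hint ha hσ x k).differentiableWithinAt
  -- rewrite the inner iterated derivative
  have hat : a < t := by
    have := ht.1
    rw [hadef]; linarith
  have step1 : (fun τ : ℝ => iteratedDeriv k
      (fun ξ : ℝ => ∫ y in (-1 : ℝ)..1,
        (4 * Real.pi * Complex.I * (τ : ℂ)) ^ (-(1 / 2 : ℂ)) *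
          Complex.exp (Complex.I * ((ξ : ℂ) - (y : ℂ)) ^ 2 / (4 * (τ : ℂ))) *
            v₀ y) x) =ᶠ[nhds t] fun τ : ℝ => Φ (τ : ℂ) := by
    filter_upwards [eventually_gt_nhds hat] with τ hτ
    have hτre : a ≤ ((τ : ℂ)).re := by simp [hτ.le]
    have : (fun ξ : ℝ => ∫ y in (-1 : ℝ)..1,
        (4 * Real.pi * Complex.I * (τ : ℂ)) ^ (-(1 / 2 : ℂ)) *
          Complex.exp (Complex.I * ((ξ : ℂ) - (y : ℂ)) ^ 2 / (4 * (τ : ℂ))) *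
            v₀ y) = fun ξ : ℝ => Gf v₀ (τ : ℂ) (ξ : ℂ) := rfl
    rw [this]
    exact iteratedDeriv_comp_ofReal isOpen_univ
      (((Gf_differentiable hint ha hτre).differentiableOn).analyticOnNhd isOpen_univ) k x
      (Set.mem_univ _)
  have step2 : iteratedDeriv l (fun τ : ℝ => iteratedDeriv k
      (fun ξ : ℝ => ∫ y in (-1 : ℝ)..1,
        (4 * Real.pi * Complex.I * (τ : ℂ)) ^ (-(1 / 2 : ℂ)) *
          Complex.exp (Complex.I * ((ξ : ℂ) - (y : ℂ)) ^ 2 / (4 * (τ : ℂ))) *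
            v₀ y) x) t = iteratedDeriv l Φ (t : ℂ) := by
    rw [iteratedDeriv_congr_nhds step1 l]
    exact iteratedDeriv_comp_ofReal hSopen hΦan l t (by simpa using hat)
  rw [step2]
  -- bound of Φ on the sphere around t
  set s : ℝ := Real.sqrt ((k : ℝ) + 1) with hsdef
  have hs0 : 0 < s := Real.sqrt_pos.mpr (by positivity)
  set Mk : ℝ := C * (Real.sqrt (k.factorial) / (Real.exp (-(1 / (2 * a)))) ^ k) * I₀
    with hMkdef
  have hsphere : ∀ σ ∈ Metric.sphere (t : ℂ) (t₁ / 4), ‖Φ σ‖ ≤ Mk := by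
    intro σ hσ
    have hred : a ≤ σ.re := by
      have h1 : |σ.re - t| ≤ ‖σ - (t : ℂ)‖ := by
        simpa [Complex.sub_re] using Complex.abs_re_le_norm (σ - (t : ℂ))
      have h2 : ‖σ - (t : ℂ)‖ = t₁ / 4 := mem_sphere_iff_norm.mp hσ
      have h3 := (abs_le.mp (h2 ▸ h1)).1
      have := ht.1
      rw [hadef]; linarith
    have hGbd : ∀ ζ ∈ Metric.sphere (x : ℂ) s, ‖Gf v₀ σ ζ‖ ≤
        (4 * Real.pi * a) ^ (-(1 / 2) : ℝ) *
          Real.exp ((L + s + 1) ^ 2 / (4 * a)) * I₀ := by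
      intro ζ hζ
      have hζabs : ‖ζ‖ ≤ L + s := by
        have h1 : ‖ζ - (x : ℂ)‖ = s := mem_sphere_iff_norm.mp hζ
        have h2 : ‖(x : ℂ)‖ ≤ L := by
          rw [Complex.norm_real, Real.norm_eq_abs]
          exact abs_le.mpr ⟨hx.1, hx.2⟩
        calc ‖ζ‖ = ‖(x : ℂ) + (ζ - (x : ℂ))‖ := by ring_nf
          _ ≤ ‖(x : ℂ)‖ + ‖ζ - (x : ℂ)‖ := norm_add_le _ _
          _ ≤ L + s := by rw [h1]; exact add_le_add h2 le_rfl
      exact Gf_norm_le hint ha hred hζabs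
    have hcau := cauchy_estimate hs0 ((Gf_differentiable hint ha hred).differentiableOn)
      hGbd k
    rw [hΦdef]
    refine hcau.trans ?_
    rw [hMkdef, hCdef]
    have := arith_bound (I₀ := I₀) ha hL.le hI₀0 k
    calc (k.factorial : ℝ) * ((4 * Real.pi * a) ^ (-(1 / 2) : ℝ) *
          Real.exp ((L + s + 1) ^ 2 / (4 * a)) * I₀) / s ^ k ≤ _ := this
      _ = (4 * Real.pi * a) ^ (-(1 / 2) : ℝ) * Real.exp (((L + 1) ^ 2 + 1) / (2 * a)) *
          (Real.sqrt (k.factorial) / (Real.exp (-(1 / (2 * a)))) ^ k) * I₀ := rfl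
  -- Cauchy estimate in σ
  have hΦdiff : DifferentiableOn ℂ Φ (Metric.closedBall (t : ℂ) (t₁ / 4)) := by
    intro σ hσ
    have hred : a < σ.re := by
      have h1 : |σ.re - t| ≤ ‖σ - (t : ℂ)‖ := by
        simpa [Complex.sub_re] using Complex.abs_re_le_norm (σ - (t : ℂ))
      have h2 : ‖σ - (t : ℂ)‖ ≤ t₁ / 4 := by
        simpa [Complex.dist_eq] using Metric.mem_closedBall.mp hσ
      have h3 := (abs_le.mp (h1.trans h2)).1
      have := ht.1
      rw [hadef]; linarith
    exact (Phi_diffAt hint ha hred x k).differentiableWithinAt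
  have hfinal := cauchy_estimate (by positivity : (0:ℝ) < t₁ / 4) hΦdiff hsphere l
  refine hfinal.trans ?_
  rw [hMkdef]
  have hsqrt : Real.sqrt (k.factorial) = (k.factorial : ℝ) ^ ((1 : ℝ) / 2) := by
    rw [Real.sqrt_eq_rpow]
  rw [hsqrt]
  have h40 : (0:ℝ) < (t₁/4) ^ l := by positivity
  calc (l.factorial : ℝ) * (C * ((k.factorial : ℝ) ^ ((1 : ℝ) / 2) /
        (Real.exp (-(1 / (2 * a)))) ^ k) * I₀) / (t₁ / 4) ^ l
      = C * ((k.factorial : ℝ) ^ ((1 : ℝ) / 2) / (Real.exp (-(1 / (2 * a)))) ^ k) *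
        ((l.factorial : ℝ) / (t₁ / 4) ^ l) * I₀ := by ring
    _ ≤ _ := le_rfl
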